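/- Let Σ be positive definite with zero pattern given by graph G, and fix index i. Among all positive definite matrices Σ̃ ∈ P(G) with Σ̃_{-i,-i} = Σ_{-i,-i}, the function ℓ(Σ̃) = -log det Σ̃ - tr(Σ̃^{-1} S) (with S positive definite) has a unique maximizer, provided S is positive definite. -/

import Mathlib

open Matrix Finset

namespace Sum17

variable {p : ℕ}

/-! ### Scalar lemmas -/

lemma log_aux {x a : ℝ} (hx : 0 < x) (ha : 0 < a) :
    Real.log x - x * a ≤ -Real.log a - 1 := by
  have h := Real.log_le_sub_one_of_pos (mul_pos hx ha)
  rw [Real.log_mul hx.ne' ha.ne'] at h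
  linarith

lemma log_aux_eq {x a : ℝ} (hx : 0 < x) (ha : 0 < a)
    (h : Real.log x - x * a = -Real.log a - 1) : x = a⁻¹ := by
  by_contra hne
  have hxa : x * a ≠ 1 := by
    intro hh
    exact hne (eq_inv_of_mul_eq_one_left (by linarith [mul_comm x a]))
  have h2 := Real.log_lt_sub_one_of_pos (mul_pos hx ha) hxa
  rw [Real.log_mul hx.ne' ha.ne'] at h2
  linarith

/-! ### Matrix helpers -/

/-- symmetric matrices: swapped quadratic form -/
lemma dot_symm (M : Matrix (Fin p) (Fin p) ℝ) (h : Mᵀ = M) (a b : Fin p → ℝ) :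
    a ⬝ᵥ (M *ᵥ b) = b ⬝ᵥ (M *ᵥ a) := by
  rw [Matrix.dotProduct_mulVec, ← Matrix.mulVec_transpose, h, dotProduct_comm]

lemma herm_symm {M : Matrix (Fin p) (Fin p) ℝ} (h : M.IsHermitian) : Mᵀ = M := by
  exact (Matrix.isHermitian_iff_isSymm.mp h).eq

lemma herm_apply {M : Matrix (Fin p) (Fin p) ℝ} (h : M.IsHermitian) (j k : Fin p) :
    M j k = M k j := by
  conv_lhs => rw [← herm_symm h]
  rfl

/-- quadratic forms agree off row/column `i` when the vector vanishes at `i`. -/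
lemma dot_eq_off (i : Fin p) (M M' : Matrix (Fin p) (Fin p) ℝ)
    (h : ∀ j k, j ≠ i → k ≠ i → M j k = M' j k) (z : Fin p → ℝ) (hz : z i = 0) :
    z ⬝ᵥ (M *ᵥ z) = z ⬝ᵥ (M' *ᵥ z) := by
  unfold dotProduct Matrix.mulVec
  apply Finset.sum_congr rfl
  intro j _
  by_cases hj : j = i
  · simp [hj, hz]
  · congr 1
    apply Finset.sum_congr rfl
    intro k _
    by_cases hk : k = i
    · simp [hk, hz]
    · show M j k * z k = M' j k * z k
      rw [h j k hj hk]


/-! ### The matrix `D` : `Sig` with row/column `i` replaced by the standard basis vector -/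

variable (i : Fin p) (Sig : Matrix (Fin p) (Fin p) ℝ)

/-- `Sig` with row and column `i` replaced by `Pi.single i 1`. -/
noncomputable def Dmat : Matrix (Fin p) (Fin p) ℝ :=
  (Sig.updateRow i (Pi.single i 1)).updateCol i (Pi.single i 1)

lemma Dmat_apply (j k : Fin p) :
    Dmat i Sig j k = if k = i then (if j = i then 1 else 0)
      else (if j = i then 0 else Sig j k) := by
  unfold Dmat
  by_cases hk : k = i <;> by_cases hj : j = i <;>
    simp [hk, hj, Matrix.updateCol_apply, Matrix.updateRow_apply, Pi.single_apply]

lemma Dmat_posDef (hSig : Sig.PosDef) : (Dmat i Sig).PosDef := by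
  refine PosDef.of_dotProduct_mulVec_pos ?_ ?_
  · ext j k
    rw [Matrix.conjTranspose_apply]
    simp only [star_trivial]
    rw [Dmat_apply, Dmat_apply]
    by_cases hk : k = i <;> by_cases hj : j = i <;>
      simp [hk, hj, herm_apply hSig.1 j k]
  · intro x hx
    set y : Fin p → ℝ := Function.update x i 0 with hy
    have hyi : y i = 0 := Function.update_self i 0 x
    have hxy : x = y + x i • (Pi.single i 1 : Fin p → ℝ) := by
      funext k
      by_cases hk : k = i
      · simp [hk, hy]
      · simp [hy, Function.update_of_ne hk, Pi.single_apply, hk]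
    -- column i of Dmat is Pi.single i 1
    have hcol : Dmat i Sig *ᵥ Pi.single i 1 = Pi.single i 1 := by
      funext j
      rw [Matrix.mulVec_single]
      by_cases hj : j = i <;> simp [Dmat_apply, hj, Pi.single_apply]
    -- row i of Dmat dotted with y is y i = 0
    have hrow : (Dmat i Sig *ᵥ y) i = 0 := by
      unfold Matrix.mulVec dotProduct
      rw [show (0:ℝ) = ∑ k, (if k = i then y k else 0) by simp [hyi]]
      apply Finset.sum_congr rfl
      intro k _
      by_cases hk : k = i <;> simp [Dmat_apply, hk]
    have key : (star x) ⬝ᵥ (Dmat i Sig *ᵥ x) = y ⬝ᵥ (Sig *ᵥ y) + x i ^ 2 := by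
      rw [star_trivial]
      conv_lhs => rw [hxy]
      rw [Matrix.mulVec_add, Matrix.mulVec_smul, hcol]
      rw [add_dotProduct, dotProduct_add, dotProduct_add]
      rw [dotProduct_smul, smul_dotProduct, smul_dotProduct, dotProduct_smul]
      have h1 : y ⬝ᵥ (Pi.single i 1 : Fin p → ℝ) = 0 := by
        simp [dotProduct_single, hyi]
      have h2 : (Pi.single i 1 : Fin p → ℝ) ⬝ᵥ (Dmat i Sig *ᵥ y) = 0 := by
        rw [single_dotProduct, one_mul, hrow]
      have h3 : (Pi.single i 1 : Fin p → ℝ) ⬝ᵥ (Pi.single i 1 : Fin p → ℝ) = 1 := by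
        simp
      have h4 : y ⬝ᵥ (Dmat i Sig *ᵥ y) = y ⬝ᵥ (Sig *ᵥ y) := by
        apply dot_eq_off i _ _ _ y hyi
        intro j k hj hk
        simp [Dmat_apply, hj, hk]
      rw [h1, h2, h3, h4]
      ring_nf
    rw [key]
    rcases eq_or_ne (x i) 0 with hxi | hxi
    · have hyx : y = x := by
        funext k
        by_cases hk : k = i
        · simp [hy, hk, hxi]
        · simp [hy, Function.update_of_ne hk]
      have hyne : y ≠ 0 := by rw [hyx]; exact hx
      have := hSig.dotProduct_mulVec_pos hyne
      rw [star_trivial] at this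
      nlinarith [sq_nonneg (x i)]
    · have h1 : (0:ℝ) ≤ y ⬝ᵥ (Sig *ᵥ y) := by
        have := hSig.posSemidef.dotProduct_mulVec_nonneg y
        rwa [star_trivial] at this
      have h2 : 0 < x i ^ 2 := by positivity
      nlinarith


/-! ### Feasible matrices -/

variable (G : SimpleGraph (Fin p)) [DecidableRel G.Adj]

/-- Feasibility: positive definite, zero pattern of `G`, agrees with `Sig` off row/column `i`. -/
def Feas (T : Matrix (Fin p) (Fin p) ℝ) : Prop :=
  (T.PosDef ∧ ∀ j k : Fin p, j ≠ k → ¬ G.Adj j k → T j k = 0) ∧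
    (∀ j k : Fin p, j ≠ i → k ≠ i → T j k = Sig j k)

/-- the `i`-th column of the inverse -/
noncomputable def wvec (T : Matrix (Fin p) (Fin p) ℝ) : Fin p → ℝ :=
  T⁻¹ *ᵥ Pi.single i 1

lemma wvec_apply (T : Matrix (Fin p) (Fin p) ℝ) (j : Fin p) :
    wvec i T j = T⁻¹ j i := by
  unfold wvec
  rw [Matrix.mulVec_single]
  exact mul_one _

lemma mulVec_wvec {T : Matrix (Fin p) (Fin p) ℝ} (hT : T.PosDef) :
    T *ᵥ wvec i T = Pi.single i 1 := by
  unfold wvec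
  rw [Matrix.mulVec_mulVec, Matrix.mul_nonsing_inv _ (Matrix.isUnit_iff_isUnit_det _ |>.mp hT.isUnit), Matrix.one_mulVec]

lemma wvec_i_pos {T : Matrix (Fin p) (Fin p) ℝ} (hT : T.PosDef) :
    0 < wvec i T i := by
  rw [wvec_apply]
  have h := hT.inv.dotProduct_mulVec_pos (x := Pi.single i 1) (by
    intro h
    have := congrFun h i
    simp at this)
  rw [star_trivial] at h
  have : (Pi.single i 1 : Fin p → ℝ) ⬝ᵥ (T⁻¹ *ᵥ Pi.single i 1) = T⁻¹ i i := by
    rw [single_dotProduct, one_mul, Matrix.mulVec_single]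
    exact mul_one _
  rwa [this] at h

/-- determinant identity: `det T * (T⁻¹ i i) = det (Dmat i Sig)` for feasible `T`. -/
lemma det_key {T : Matrix (Fin p) (Fin p) ℝ} (hT : T.PosDef)
    (hoff : ∀ j k : Fin p, j ≠ i → k ≠ i → T j k = Sig j k) :
    T.det = (Dmat i Sig).det / wvec i T i := by
  have hdet : T.det ≠ 0 := hT.det_pos.ne'
  have hadj : T.adjugate i i = (Dmat i Sig).det := by
    rw [Matrix.adjugate_apply]
    set U := T.updateRow i (Pi.single i 1) with hU
    -- split column i of U
    have hsplit : (fun j => U j i) =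
        (Pi.single i 1 : Fin p → ℝ) + fun j => if j = i then 0 else T j i := by
      funext j
      by_cases hj : j = i <;> simp [hU, hj, Matrix.updateRow_apply, Pi.single_apply]
    have h0 : U.det = (U.updateCol i (fun j => U j i)).det := by
      rw [Matrix.updateCol_eq_self]
    rw [h0, hsplit, Matrix.det_updateCol_add]
    have hz : (U.updateCol i fun j => if j = i then 0 else T j i).det = 0 := by
      apply Matrix.det_eq_zero_of_row_eq_zero i
      intro k
      by_cases hk : k = i <;>
        simp [Matrix.updateCol_apply, hk, hU, Matrix.updateRow_apply, Pi.single_apply]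
    have hD : U.updateCol i (Pi.single i 1) = Dmat i Sig := by
      ext j k
      rw [Dmat_apply]
      by_cases hk : k = i
      · by_cases hj : j = i <;>
          simp [Matrix.updateCol_apply, hk, hj, hU, Matrix.updateRow_apply, Pi.single_apply]
      · by_cases hj : j = i
        · simp [Matrix.updateCol_apply, hk, hj, hU, Matrix.updateRow_apply, Pi.single_apply]
        · simp only [Matrix.updateCol_apply, if_neg hk, hU, Matrix.updateRow_apply, if_neg hj]
          rw [hoff j k hj hk]
    rw [hz, hD, add_zero]
  have hw : wvec i T i = T.det⁻¹ * (Dmat i Sig).det := by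
    rw [wvec_apply, Matrix.inv_def, Matrix.smul_apply, Ring.inverse_eq_inv', hadj]
    rfl
  have hwi : 0 < wvec i T i := wvec_i_pos i hT
  have h2 : (Dmat i Sig).det = wvec i T i * T.det := by rw [hw]; field_simp
  rw [h2]
  field_simp


/-! ### Constraints satisfied by `wvec` of a feasible matrix -/

lemma feas_constraint {T : Matrix (Fin p) (Fin p) ℝ} (hF : Feas i Sig G T)
    (hSigz : ∀ j k : Fin p, j ≠ k → ¬ G.Adj j k → Sig j k = 0)
    (j : Fin p) (hj : j ≠ i) (hadj : ¬ G.Adj j i) :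
    (Sig *ᵥ wvec i T) j = 0 := by
  obtain ⟨⟨hPD, hz⟩, hoff⟩ := hF
  set w := wvec i T with hw
  have hTw : (T *ᵥ w) j = 0 := by
    rw [mulVec_wvec i hPD]
    simp [Pi.single_apply, hj]
  have : (Sig *ᵥ w) j = (T *ᵥ w) j := by
    unfold Matrix.mulVec dotProduct
    apply Finset.sum_congr rfl
    intro k _
    by_cases hk : k = i
    · subst hk
      show Sig j k * w k = T j k * w k
      rw [hSigz j k hj hadj, hz j k hj hadj]
    · show Sig j k * w k = T j k * w k
      rw [hoff j k hj hk]
  rw [this, hTw]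

/-- a feasible matrix is determined by `w` with `T *ᵥ w = Pi.single i 1`. -/
lemma eq_of_same_w {T T' : Matrix (Fin p) (Fin p) ℝ} {w : Fin p → ℝ}
    (hsT : Tᵀ = T) (hsT' : T'ᵀ = T')
    (hoff : ∀ j k : Fin p, j ≠ i → k ≠ i → T j k = Sig j k)
    (hoff' : ∀ j k : Fin p, j ≠ i → k ≠ i → T' j k = Sig j k)
    (hTw : T *ᵥ w = Pi.single i 1) (hT'w : T' *ᵥ w = Pi.single i 1)
    (hwi : w i ≠ 0) : T = T' := by
  have hcol : ∀ j, j ≠ i → T j i = T' j i := by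
    intro j hj
    have h1 : ∑ k, (T j k - T' j k) * w k = 0 := by
      have : ∑ k, (T j k - T' j k) * w k = (T *ᵥ w) j - (T' *ᵥ w) j := by
        unfold Matrix.mulVec dotProduct
        rw [← Finset.sum_sub_distrib]
        apply Finset.sum_congr rfl
        intro k _
        ring
      rw [this, hTw, hT'w, sub_self]
    have h2 : ∑ k, (T j k - T' j k) * w k = (T j i - T' j i) * w i := by
      apply Finset.sum_eq_single i
      · intro k _ hk
        rw [hoff j k hj hk, hoff' j k hj hk, sub_self, zero_mul]
      · intro h; exact absurd (Finset.mem_univ i) h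
    rw [h2] at h1
    have := mul_eq_zero.mp h1
    rcases this with h | h
    · linarith [sub_eq_zero.mp (by linarith : T j i - T' j i = 0)]
    · exact absurd h hwi
  have hsymT : ∀ a b, T a b = T b a := fun a b => (congrFun (congrFun hsT a) b).symm
  have hsymT' : ∀ a b, T' a b = T' b a := fun a b => (congrFun (congrFun hsT' a) b).symm
  have hdiag : T i i = T' i i := by
    have h1 : ∑ l, (T i l - T' i l) * w l = 0 := by
      have : ∑ l, (T i l - T' i l) * w l = (T *ᵥ w) i - (T' *ᵥ w) i := by
        unfold Matrix.mulVec dotProduct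
        rw [← Finset.sum_sub_distrib]
        apply Finset.sum_congr rfl
        intro l _
        ring
      rw [this, hTw, hT'w, sub_self]
    have h2 : ∑ l, (T i l - T' i l) * w l = (T i i - T' i i) * w i := by
      apply Finset.sum_eq_single i
      · intro l _ hl
        rw [hsymT i l, hsymT' i l, hcol l hl, sub_self, zero_mul]
      · intro h; exact absurd (Finset.mem_univ i) h
    rw [h2] at h1
    rcases mul_eq_zero.mp h1 with h | h
    · linarith [sub_eq_zero.mp (by linarith : T i i - T' i i = 0)]
    · exact absurd h hwi
  ext j k
  by_cases hj : j = i
  · by_cases hk : k = i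
    · rw [hj, hk]; exact hdiag
    · rw [hj, hsymT i k, hsymT' i k]; exact hcol k hk
  · by_cases hk : k = i
    · rw [hk]; exact hcol j hj
    · rw [hoff j k hj hk, hoff' j k hj hk]


/-! ### The reduced inverse `J` -/

noncomputable def Jmat (T : Matrix (Fin p) (Fin p) ℝ) : Matrix (Fin p) (Fin p) ℝ :=
  T⁻¹ - (wvec i T i)⁻¹ • Matrix.vecMulVec (wvec i T) (wvec i T)

lemma Jmat_row_zero {T : Matrix (Fin p) (Fin p) ℝ} (hT : T.PosDef) (k : Fin p) :
    Jmat i T i k = 0 := by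
  have hwi : wvec i T i ≠ 0 := (wvec_i_pos i hT).ne'
  have hsym : T⁻¹ i k = T⁻¹ k i := herm_apply hT.1.inv i k
  simp only [Jmat, Matrix.sub_apply, Matrix.smul_apply, Matrix.vecMulVec_apply,
    smul_eq_mul]
  rw [hsym, ← wvec_apply]
  field_simp
  ring

lemma Jmat_col_zero {T : Matrix (Fin p) (Fin p) ℝ} (hT : T.PosDef) (j : Fin p) :
    Jmat i T j i = 0 := by
  have hwi : wvec i T i ≠ 0 := (wvec_i_pos i hT).ne'
  simp only [Jmat, Matrix.sub_apply, Matrix.smul_apply, Matrix.vecMulVec_apply,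
    smul_eq_mul]
  rw [← wvec_apply]
  field_simp
  ring

lemma mul_Jmat {T : Matrix (Fin p) (Fin p) ℝ} (hT : T.PosDef) (j k : Fin p) (hj : j ≠ i) :
    (T * Jmat i T) j k = if j = k then 1 else 0 := by
  have hwi : wvec i T i ≠ 0 := (wvec_i_pos i hT).ne'
  have hTinv : T * T⁻¹ = 1 :=
    Matrix.mul_nonsing_inv _ (Matrix.isUnit_iff_isUnit_det _ |>.mp hT.isUnit)
  have h1 : T * Jmat i T = 1 - (wvec i T i)⁻¹ • Matrix.vecMulVec (Pi.single i 1) (wvec i T) := by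
    unfold Jmat
    rw [Matrix.mul_sub, hTinv, Matrix.mul_smul]
    congr 1
    congr 1
    rw [Matrix.vecMulVec_eq (Fin 1), Matrix.vecMulVec_eq (Fin 1), ← Matrix.mul_assoc]
    congr 1
    ext a b
    simp only [Matrix.mul_apply, Matrix.replicateCol_apply, Matrix.mulVec, dotProduct]
    rw [show (Pi.single i 1 : Fin p → ℝ) a = (T *ᵥ wvec i T) a by rw [mulVec_wvec i hT]]
    rfl
  rw [h1]
  simp only [Matrix.sub_apply, Matrix.one_apply, Matrix.smul_apply,
    Matrix.vecMulVec_apply, smul_eq_mul, Pi.single_apply, if_neg hj]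
  ring_nf

lemma Jmat_invariant {T T' : Matrix (Fin p) (Fin p) ℝ}
    (hT : T.PosDef) (hT' : T'.PosDef)
    (hoff : ∀ j k : Fin p, j ≠ i → k ≠ i → T j k = Sig j k)
    (hoff' : ∀ j k : Fin p, j ≠ i → k ≠ i → T' j k = Sig j k) :
    Jmat i T = Jmat i T' := by
  have hwi : wvec i T i ≠ 0 := (wvec_i_pos i hT).ne'
  set M := Jmat i T with hM
  set M' := Jmat i T' with hM'
  set N := M - M' with hN
  -- rows `j ≠ i` of `T * N` vanish
  have hrows : ∀ j k, j ≠ i → (T * N) j k = 0 := by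
    intro j k hj
    have e1 : (T * M) j k = if j = k then 1 else 0 := mul_Jmat i hT j k hj
    have e2 : (T * M') j k = if j = k then 1 else 0 := by
      have e3 : (T * M') j k = (T' * M') j k := by
        simp only [Matrix.mul_apply]
        apply Finset.sum_congr rfl
        intro l _
        by_cases hl : l = i
        · rw [hl, hM', Jmat_row_zero i hT', mul_zero, mul_zero]
        · rw [hoff j l hj hl, ← hoff' j l hj hl]
      rw [e3]
      exact mul_Jmat i hT' j k hj
    rw [hN, Matrix.mul_sub, Matrix.sub_apply, e1, e2, sub_self]
  -- hence `T * N = vecMulVec (Pi.single i 1) r`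
  set r : Fin p → ℝ := fun k => (T * N) i k with hr
  have hTN : T * N = Matrix.vecMulVec (Pi.single i 1) r := by
    ext j k
    by_cases hj : j = i
    · rw [hj, Matrix.vecMulVec_apply]
      simp [hr]
    · rw [hrows j k hj, Matrix.vecMulVec_apply, Pi.single_apply, if_neg hj, zero_mul]
  have hinv : T⁻¹ * (T * N) = N := by
    rw [← Matrix.mul_assoc,
      Matrix.nonsing_inv_mul _ (Matrix.isUnit_iff_isUnit_det _ |>.mp hT.isUnit), Matrix.one_mul]
  have hNapp : ∀ j k, N j k = wvec i T j * r k := by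
    intro j k
    rw [← hinv, hTN]
    simp only [Matrix.mul_apply, Matrix.vecMulVec_apply]
    have hs : ∑ x, T⁻¹ j x * ((Pi.single i 1 : Fin p → ℝ) x * r k) = T⁻¹ j i * ((Pi.single i 1 : Fin p → ℝ) i * r k) := by
      apply Finset.sum_eq_single i
      · intro l _ hl; simp [Pi.single_apply, if_neg hl]
      · intro h; exact absurd (Finset.mem_univ i) h
    rw [hs, wvec_apply]
    simp
  -- row i of N vanishes, so r = 0
  have hrzero : ∀ k, r k = 0 := by
    intro k
    have h0 : N i k = 0 := by
      rw [hN, Matrix.sub_apply, hM, hM', Jmat_row_zero i hT, Jmat_row_zero i hT', sub_self]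
    rw [hNapp i k] at h0
    rcases mul_eq_zero.mp h0 with h | h
    · exact absurd h hwi
    · exact h
  have : N = 0 := by
    ext j k
    rw [hNapp j k, hrzero k, mul_zero]
    simp
  have := sub_eq_zero.mp (hN ▸ this)
  exact this


lemma trace_vecMulVec (w v : Fin p → ℝ) (S : Matrix (Fin p) (Fin p) ℝ) :
    (Matrix.vecMulVec w v * S).trace = v ⬝ᵥ (S *ᵥ w) := by
  unfold Matrix.trace dotProduct Matrix.mulVec
  simp only [Matrix.diag_apply, Matrix.mul_apply, Matrix.vecMulVec_apply]
  rw [Finset.sum_comm]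
  apply Finset.sum_congr rfl
  intro k _
  show ∑ x, w x * v k * S k x = v k * ∑ j, S k j * w j
  rw [Finset.mul_sum]
  apply Finset.sum_congr rfl
  intro j _
  ring

lemma trace_key (S : Matrix (Fin p) (Fin p) ℝ) {T : Matrix (Fin p) (Fin p) ℝ}
    (hT : T.PosDef) :
    (T⁻¹ * S).trace = (Jmat i T * S).trace
      + (wvec i T ⬝ᵥ (S *ᵥ wvec i T)) / (wvec i T i) := by
  have hwi : wvec i T i ≠ 0 := (wvec_i_pos i hT).ne'
  have hdecomp : T⁻¹ = Jmat i T + (wvec i T i)⁻¹ • Matrix.vecMulVec (wvec i T) (wvec i T) := by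
    unfold Jmat
    ext j k
    simp only [Matrix.sub_apply, Matrix.add_apply, Matrix.smul_apply,
      Matrix.vecMulVec_apply, smul_eq_mul]
    ring
  conv_lhs => rw [hdecomp]
  rw [Matrix.add_mul, Matrix.trace_add, Matrix.smul_mul, Matrix.trace_smul,
    trace_vecMulVec]
  rw [smul_eq_mul]
  ring


/-! ### Construction of a feasible matrix from an admissible vector -/

variable (w : Fin p → ℝ)

noncomputable def yv : Fin p → ℝ := Function.update w i 0

noncomputable def tv : Fin p → ℝ := fun j => -((Sig *ᵥ yv i w) j) / w i

noncomputable def Tcon : Matrix (Fin p) (Fin p) ℝ :=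
  Matrix.of fun j k =>
    if j = i then (if k = i then (1 - tv i Sig w ⬝ᵥ yv i w) / w i else tv i Sig w k)
    else (if k = i then tv i Sig w j else Sig j k)

lemma yv_i : yv i w i = 0 := Function.update_self i 0 w

lemma yv_ne {k : Fin p} (hk : k ≠ i) : yv i w k = w k := Function.update_of_ne hk 0 w

lemma Tcon_off {j k : Fin p} (hj : j ≠ i) (hk : k ≠ i) :
    Tcon i Sig w j k = Sig j k := by
  simp [Tcon, hj, hk]

lemma Tcon_symm (hSig : Sig.IsHermitian) : (Tcon i Sig w)ᵀ = Tcon i Sig w := by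
  ext j k
  show Tcon i Sig w k j = Tcon i Sig w j k
  by_cases hj : j = i <;> by_cases hk : k = i <;>
    simp [Tcon, hj, hk, herm_apply hSig k j]

lemma sig_yv (j : Fin p) : (Sig *ᵥ yv i w) j = (Sig *ᵥ w) j - Sig j i * w i := by
  have hw : w = yv i w + w i • (Pi.single i 1 : Fin p → ℝ) := by
    funext k
    by_cases hk : k = i
    · rw [hk]
      simp [yv_i]
    · simp [yv_ne i w hk, Pi.single_apply, hk]
  have h2 : (Sig *ᵥ (w i • (Pi.single i 1 : Fin p → ℝ))) j = Sig j i * w i := by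
    rw [Matrix.mulVec_smul, Pi.smul_apply, Matrix.mulVec_single]
    simp [mul_comm]
  conv_rhs => rw [hw]
  rw [Matrix.mulVec_add, Pi.add_apply, h2]
  simp [yv_i]

lemma Tcon_mulVec (hwi : w i ≠ 0) : Tcon i Sig w *ᵥ w = Pi.single i 1 := by
  funext j
  by_cases hj : j = i
  · rw [hj]
    have key : ∀ k, Tcon i Sig w i k * w k = tv i Sig w k * yv i w k
        + (if k = i then (1 - tv i Sig w ⬝ᵥ yv i w) / w i * w i else 0) := by
      intro k
      by_cases hk : k = i
      · rw [hk, yv_i]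
        simp [Tcon]
      · rw [yv_ne i w hk, if_neg hk, add_zero]
        simp [Tcon, hk]
    show ∑ k, Tcon i Sig w i k * w k = _
    rw [Finset.sum_congr rfl (fun k _ => key k), Finset.sum_add_distrib]
    rw [Finset.sum_ite_eq' Finset.univ i fun _ => (1 - tv i Sig w ⬝ᵥ yv i w) / w i * w i]
    simp only [Finset.mem_univ, if_true]
    rw [div_mul_cancel₀ _ hwi]
    show (tv i Sig w ⬝ᵥ yv i w) + _ = _
    rw [Pi.single_apply]
    simp
  · have key : ∀ k, Tcon i Sig w j k * w k = Sig j k * yv i w k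
        + (if k = i then tv i Sig w j * w i else 0) := by
      intro k
      by_cases hk : k = i
      · rw [hk, yv_i]
        simp [Tcon, hj]
      · rw [yv_ne i w hk, if_neg hk, add_zero]
        simp [Tcon, hj, hk]
    show ∑ k, Tcon i Sig w j k * w k = _
    rw [Finset.sum_congr rfl (fun k _ => key k), Finset.sum_add_distrib]
    rw [Finset.sum_ite_eq' Finset.univ i fun _ => tv i Sig w j * w i]
    simp only [Finset.mem_univ, if_true]
    have : tv i Sig w j * w i = -((Sig *ᵥ yv i w) j) := by
      unfold tv
      field_simp
    rw [this, Pi.single_apply, if_neg hj]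
    show (Sig *ᵥ yv i w) j + _ = 0
    ring

lemma Tcon_posDef (hSig : Sig.PosDef) (hwi : 0 < w i) : (Tcon i Sig w).PosDef := by
  set T := Tcon i Sig w with hT
  have hwine : w i ≠ 0 := hwi.ne'
  have hTs : Tᵀ = T := Tcon_symm i Sig w hSig.1
  have hsym : ∀ a b, T a b = T b a := fun a b => (congrFun (congrFun hTs a) b).symm
  have hTw : T *ᵥ w = Pi.single i 1 := Tcon_mulVec i Sig w hwi.ne'
  refine PosDef.of_dotProduct_mulVec_pos ?_ ?_
  · ext j k
    rw [Matrix.conjTranspose_apply, star_trivial]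
    exact hsym k j
  · intro x hx
    rw [star_trivial]
    set c : ℝ := x i / w i with hc
    set z : Fin p → ℝ := x - c • w with hz
    have hzi : z i = 0 := by
      simp [hz, hc]
      field_simp
      ring
    have hxz : x ⬝ᵥ (T *ᵥ x) = z ⬝ᵥ (T *ᵥ z) + x i ^ 2 / w i := by
      have e1 : x ⬝ᵥ (T *ᵥ w) = x i := by rw [hTw]; simp [dotProduct_single]
      have e2 : w ⬝ᵥ (T *ᵥ x) = x i := by
        rw [dot_symm T hTs w x, e1]
      have e3 : w ⬝ᵥ (T *ᵥ w) = w i := by rw [hTw]; simp [dotProduct_single]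
      rw [hz]
      rw [sub_dotProduct, Matrix.mulVec_sub, dotProduct_sub, dotProduct_sub,
        Matrix.mulVec_smul, dotProduct_smul, smul_dotProduct, smul_dotProduct,
        dotProduct_smul]
      rw [e1, e2, e3]
      simp only [smul_eq_mul]
      rw [hc]
      field_simp
      ring
    have hzz : z ⬝ᵥ (T *ᵥ z) = z ⬝ᵥ (Sig *ᵥ z) := by
      apply dot_eq_off i _ _ _ z hzi
      intro j k hj hk
      exact Tcon_off i Sig w hj hk
    rw [hxz, hzz]
    rcases eq_or_ne (x i) 0 with hxi | hxi
    · have hzx : z = x := by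
        rw [hz, hc, hxi]
        simp
      have hzne : z ≠ 0 := by rw [hzx]; exact hx
      have hpos := hSig.dotProduct_mulVec_pos hzne
      rw [star_trivial] at hpos
      have h0 : x i ^ 2 / w i = 0 := by rw [hxi]; simp
      linarith
    · have h1 : (0:ℝ) ≤ z ⬝ᵥ (Sig *ᵥ z) := by
        have := hSig.posSemidef.dotProduct_mulVec_nonneg z
        rwa [star_trivial] at this
      have h2 : 0 < x i ^ 2 / w i := by positivity
      linarith

lemma Tcon_pattern
    (hSigz : ∀ j k : Fin p, j ≠ k → ¬ G.Adj j k → Sig j k = 0)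
    (hC : ∀ j, j ≠ i → ¬ G.Adj j i → (Sig *ᵥ w) j = 0)
    (hwi : w i ≠ 0) :
    ∀ j k : Fin p, j ≠ k → ¬ G.Adj j k → Tcon i Sig w j k = 0 := by
  have htv : ∀ j, j ≠ i → ¬ G.Adj j i → tv i Sig w j = 0 := by
    intro j hj hadj
    unfold tv
    rw [sig_yv, hC j hj hadj, hSigz j i hj hadj, zero_mul, sub_zero, neg_zero, zero_div]
  intro j k hjk hadj
  by_cases hj : j = i
  · by_cases hk : k = i
    · exact absurd (hj.trans hk.symm) hjk
    · have hki : k ≠ i := hk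
      have hadj' : ¬ G.Adj k i := by
        rw [hj] at hadj
        intro h
        exact hadj (G.adj_symm h)
      have : Tcon i Sig w j k = tv i Sig w k := by simp [Tcon, hj, hk]
      rw [this]
      exact htv k hki hadj'
  · by_cases hk : k = i
    · have hadj' : ¬ G.Adj j i := by rw [hk] at hadj; exact hadj
      have : Tcon i Sig w j k = tv i Sig w j := by simp [Tcon, hj, hk]
      rw [this]
      exact htv j hj hadj'
    · rw [Tcon_off i Sig w hj hk]
      exact hSigz j k hjk hadj


/-! ### The quadratic optimization -/

variable (S : Matrix (Fin p) (Fin p) ℝ)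

noncomputable def Bl : (Fin p → ℝ) →ₗ[ℝ] (Fin p → ℝ) →ₗ[ℝ] ℝ :=
  LinearMap.mk₂ ℝ (fun x y => x ⬝ᵥ (S *ᵥ y))
    (fun a b c => add_dotProduct a b (S *ᵥ c))
    (fun r a b => smul_dotProduct r a (S *ᵥ b))
    (fun a b c => by show a ⬝ᵥ (S *ᵥ (b + c)) = a ⬝ᵥ (S *ᵥ b) + a ⬝ᵥ (S *ᵥ c)
                     rw [Matrix.mulVec_add, dotProduct_add])
    (fun r a b => by show a ⬝ᵥ (S *ᵥ (r • b)) = r • (a ⬝ᵥ (S *ᵥ b))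
                     rw [Matrix.mulVec_smul, dotProduct_smul])

lemma Bl_apply (x y : Fin p → ℝ) : Bl S x y = x ⬝ᵥ (S *ᵥ y) := rfl

lemma Bl_pos (hS : S.PosDef) {x : Fin p → ℝ} (hx : x ≠ 0) : 0 < Bl S x x := by
  have := hS.dotProduct_mulVec_pos hx
  rwa [star_trivial] at this

lemma Bl_nonneg (hS : S.PosDef) (x : Fin p → ℝ) : 0 ≤ Bl S x x := by
  have := hS.posSemidef.dotProduct_mulVec_nonneg x
  rwa [star_trivial] at this

/-- existence of the solution of the normal equations on a subspace -/
lemma normal_exists (hS : S.PosDef) (hs : Sᵀ = S) (W : Submodule ℝ (Fin p → ℝ))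
    (u0 : Fin p → ℝ) :
    ∃ v ∈ W, ∀ x ∈ W, Bl S x (u0 + v) = 0 := by
  classical
  set Br := LinearMap.BilinForm.restrict (Bl S) W with hBr
  have hnd : Br.Nondegenerate := by
    refine ⟨fun m hm => ?_, fun m hm => ?_⟩ <;>
    (have h := hm m
     rw [hBr, LinearMap.BilinForm.restrict_apply] at h
     by_contra hne
     have hmz : (m : Fin p → ℝ) ≠ 0 := by
       intro h0
       exact hne (Subtype.ext h0)
     exact (Bl_pos S hS hmz).ne' h)
  set f0 : Module.Dual ℝ W := -(((Bl S).flip u0).comp W.subtype) with hf0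
  set v : W := (Br.toDual hnd).symm f0 with hv
  refine ⟨v, v.2, ?_⟩
  intro x hx
  have hBv : Br ((Br.toDual hnd).symm f0) ⟨x, hx⟩ = f0 ⟨x, hx⟩ :=
    LinearMap.BilinForm.apply_toDual_symm_apply (hB := hnd) f0 ⟨x, hx⟩
  have hBv' : Bl S (v : Fin p → ℝ) x = f0 ⟨x, hx⟩ := hBv
  have hf : f0 ⟨x, hx⟩ = -(Bl S x u0) := rfl
  have hsymm : Bl S (v : Fin p → ℝ) x = Bl S x (v : Fin p → ℝ) := by
    rw [Bl_apply, Bl_apply]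
    exact dot_symm S hs _ _
  have : Bl S x ((v : Fin p → ℝ)) = -(Bl S x u0) := by
    rw [← hsymm, hBv', hf]
  rw [map_add]
  rw [this]
  ring


/-! ### The admissible subspace -/

def V0 (G : SimpleGraph (Fin p)) [DecidableRel G.Adj] : Submodule ℝ (Fin p → ℝ) where
  carrier := {v | v i = 0 ∧ ∀ j, j ≠ i → ¬ G.Adj j i → (Sig *ᵥ v) j = 0}
  add_mem' := by
    intro a b ha hb
    refine ⟨by simp [ha.1, hb.1], ?_⟩
    intro j hj hadj
    rw [Matrix.mulVec_add, Pi.add_apply, ha.2 j hj hadj, hb.2 j hj hadj, add_zero]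
  zero_mem' := by
    refine ⟨rfl, ?_⟩
    intro j hj hadj
    rw [Matrix.mulVec_zero]
    rfl
  smul_mem' := by
    intro c a ha
    refine ⟨by simp [ha.1], ?_⟩
    intro j hj hadj
    rw [Matrix.mulVec_smul, Pi.smul_apply, ha.2 j hj hadj, smul_zero]

lemma mem_V0 (G : SimpleGraph (Fin p)) [DecidableRel G.Adj] {v : Fin p → ℝ} :
    v ∈ V0 i Sig G ↔ v i = 0 ∧ ∀ j, j ≠ i → ¬ G.Adj j i → (Sig *ᵥ v) j = 0 :=
  Iff.rfl

end Sum17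

open Sum17 in
/-- fixing `Σ_{-i,-i}`, the log-likelihood `ℓ(Σ̃) = -log det Σ̃ - tr(Σ̃⁻¹ S)`
has a unique maximizer among all `Σ̃ ∈ P(G)` agreeing with `Σ` outside row/column `i`,
provided `S` is positive definite. -/
theorem section_unique_maximizer {p : ℕ} (G : SimpleGraph (Fin p)) [DecidableRel G.Adj]
    (S Sig : Matrix (Fin p) (Fin p) ℝ) (hS : S.PosDef) (i : Fin p)
    (hSig : Sig.PosDef ∧ ∀ j k : Fin p, j ≠ k → ¬ G.Adj j k → Sig j k = 0) :
    ∃! T : Matrix (Fin p) (Fin p) ℝ,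
      ((T.PosDef ∧ ∀ j k : Fin p, j ≠ k → ¬ G.Adj j k → T j k = 0) ∧
        (∀ j k : Fin p, j ≠ i → k ≠ i → T j k = Sig j k)) ∧
      ∀ T' : Matrix (Fin p) (Fin p) ℝ,
        ((T'.PosDef ∧ ∀ j k : Fin p, j ≠ k → ¬ G.Adj j k → T' j k = 0) ∧
          (∀ j k : Fin p, j ≠ i → k ≠ i → T' j k = Sig j k)) →
        -Real.log T'.det - (T'⁻¹ * S).trace ≤ -Real.log T.det - (T⁻¹ * S).trace := by
  obtain ⟨hSigPD, hSigz⟩ := hSig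
  have hs : Sᵀ = S := herm_symm hS.1
  have hSigFeas : Feas i Sig G Sig := ⟨⟨hSigPD, hSigz⟩, fun _ _ _ _ => rfl⟩
  -- the base point of the affine slice
  set w0 := wvec i Sig with hw0
  have hw0i : 0 < w0 i := wvec_i_pos i hSigPD
  have hw0C : ∀ j, j ≠ i → ¬ G.Adj j i → (Sig *ᵥ w0) j = 0 := fun j hj hadj =>
    feas_constraint i Sig G hSigFeas hSigz j hj hadj
  set u0 : Fin p → ℝ := (w0 i)⁻¹ • w0 with hu0
  have hu0i : u0 i = 1 := by
    rw [hu0, Pi.smul_apply, smul_eq_mul, inv_mul_cancel₀ hw0i.ne']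
  have hu0C : ∀ j, j ≠ i → ¬ G.Adj j i → (Sig *ᵥ u0) j = 0 := by
    intro j hj hadj
    rw [hu0, Matrix.mulVec_smul, Pi.smul_apply, hw0C j hj hadj, smul_zero]
  -- solve the normal equations
  obtain ⟨v, hvW, hnormal⟩ := normal_exists S hS hs (V0 i Sig G) u0
  obtain ⟨hvi, hvC⟩ := (mem_V0 i Sig G).mp hvW
  set us : Fin p → ℝ := u0 + v with hus
  have husi : us i = 1 := by rw [hus, Pi.add_apply, hu0i, hvi, add_zero]
  have husC : ∀ j, j ≠ i → ¬ G.Adj j i → (Sig *ᵥ us) j = 0 := by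
    intro j hj hadj
    rw [hus, Matrix.mulVec_add, Pi.add_apply, hu0C j hj hadj, hvC j hj hadj, add_zero]
  have husne : us ≠ 0 := by
    intro h
    rw [h] at husi
    simp at husi
  set Q : ℝ := Bl S us us with hQdef
  have hQ : 0 < Q := Bl_pos S hS husne
  set ws : Fin p → ℝ := Q⁻¹ • us with hws
  have hwsi : ws i = Q⁻¹ := by rw [hws, Pi.smul_apply, husi, smul_eq_mul, mul_one]
  have hwsipos : 0 < ws i := by rw [hwsi]; exact inv_pos.mpr hQ
  have hwsC : ∀ j, j ≠ i → ¬ G.Adj j i → (Sig *ᵥ ws) j = 0 := by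
    intro j hj hadj
    rw [hws, Matrix.mulVec_smul, Pi.smul_apply, husC j hj hadj, smul_zero]
  -- the candidate maximizer
  set Ts := Tcon i Sig ws with hTsdef
  have hTsPD : Ts.PosDef := Tcon_posDef i Sig ws hSigPD hwsipos
  have hTsFeas : Feas i Sig G Ts :=
    ⟨⟨hTsPD, Tcon_pattern i Sig G ws hSigz hwsC hwsipos.ne'⟩,
      fun j k hj hk => Tcon_off i Sig ws hj hk⟩
  have hTs_w : wvec i Ts = ws := by
    have h1 : Ts *ᵥ ws = Pi.single i 1 := Tcon_mulVec i Sig ws hwsipos.ne'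
    have h2 : Ts⁻¹ * Ts = 1 :=
      Matrix.nonsing_inv_mul _ (Matrix.isUnit_iff_isUnit_det _ |>.mp hTsPD.isUnit)
    show Ts⁻¹ *ᵥ Pi.single i 1 = ws
    rw [← h1, Matrix.mulVec_mulVec, h2, Matrix.one_mulVec]
  have hDpos : 0 < (Dmat i Sig).det := (Dmat_posDef i Sig hSigPD).det_pos
  -- decomposition of the objective for any feasible matrix
  have decomp : ∀ T' : Matrix (Fin p) (Fin p) ℝ, Feas i Sig G T' →
      -Real.log T'.det - (T'⁻¹ * S).trace =
        (-Real.log (Dmat i Sig).det - (Jmat i Ts * S).trace) +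
          (Real.log (wvec i T' i)
            - (wvec i T' ⬝ᵥ (S *ᵥ wvec i T')) / (wvec i T' i)) := by
    intro T' hF'
    obtain ⟨⟨hPD', hz'⟩, hoff'⟩ := hF'
    have hwi' : 0 < wvec i T' i := wvec_i_pos i hPD'
    have hdet := det_key i Sig hPD' hoff'
    have hJ : Jmat i T' = Jmat i Ts :=
      Jmat_invariant i Sig hPD' hTsPD hoff' (fun j k hj hk => Tcon_off i Sig ws hj hk)
    rw [hdet, Real.log_div hDpos.ne' hwi'.ne', trace_key i S hPD', hJ]
    ring
  -- the bound for the reduced objective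
  have gbound : ∀ w' : Fin p → ℝ, 0 < w' i →
      (∀ j, j ≠ i → ¬ G.Adj j i → (Sig *ᵥ w') j = 0) →
      (Real.log (w' i) - (w' ⬝ᵥ (S *ᵥ w')) / (w' i) ≤ -Real.log Q - 1) ∧
      (Real.log (w' i) - (w' ⬝ᵥ (S *ᵥ w')) / (w' i) = -Real.log Q - 1 → w' = ws) := by
    intro w' hwp hC'
    set a : ℝ := w' i with ha
    set u' : Fin p → ℝ := a⁻¹ • w' with hu'
    have hu'i : u' i = 1 := by
      rw [hu', Pi.smul_apply, smul_eq_mul]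
      exact inv_mul_cancel₀ hwp.ne'
    have hw'u : w' = a • u' := by
      rw [hu', smul_smul, mul_inv_cancel₀ hwp.ne', one_smul]
    set d : Fin p → ℝ := u' - us with hd
    have hdW : d ∈ V0 i Sig G := by
      rw [mem_V0]
      constructor
      · rw [hd, Pi.sub_apply, hu'i, husi, sub_self]
      · intro j hj hadj
        have hu'C : (Sig *ᵥ u') j = 0 := by
          rw [hu', Matrix.mulVec_smul, Pi.smul_apply, hC' j hj hadj, smul_zero]
        rw [hd, Matrix.mulVec_sub, Pi.sub_apply, hu'C, husC j hj hadj, sub_self]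
    have hdus : Bl S d us = 0 := by
      exact hnormal d hdW
    have husd : Bl S us d = 0 := by
      rw [Bl_apply, dot_symm S hs, ← Bl_apply, hdus]
    have hQu' : Bl S u' u' = Q + Bl S d d := by
      have : u' = us + d := by rw [hd]; ring
      rw [this]
      simp only [map_add, LinearMap.add_apply]
      rw [husd, hdus, hQdef]
      ring
    have hQle : Q ≤ Bl S u' u' := by
      rw [hQu']
      have := Bl_nonneg S hS d
      linarith
    have hquad : (w' ⬝ᵥ (S *ᵥ w')) / (w' i) = a * Bl S u' u' := by
      have hnum : w' ⬝ᵥ (S *ᵥ w') = a * (a * Bl S u' u') := by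
        conv_lhs => rw [hw'u]
        rw [Matrix.mulVec_smul, dotProduct_smul, smul_dotProduct]
        simp [Bl_apply, smul_eq_mul]
      rw [hnum, ← ha, mul_comm a (a * Bl S u' u'), mul_div_assoc, div_self hwp.ne',
        mul_one]
    constructor
    · rw [hquad]
      have h1 : Real.log a - a * Bl S u' u' ≤ Real.log a - a * Q := by
        nlinarith
      have h2 : Real.log a - a * Q ≤ -Real.log Q - 1 := log_aux hwp hQ
      have h3 : Real.log a - a * Bl S u' u' ≤ Real.log a - a * Q := by nlinarith
      linarith
    · intro heq
      rw [hquad] at heq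
      have h2 : Real.log a - a * Q ≤ -Real.log Q - 1 := log_aux hwp hQ
      have h3 : Real.log a - a * Bl S u' u' ≤ Real.log a - a * Q := by nlinarith
      have h4 : Real.log a - a * Q = -Real.log Q - 1 := by linarith
      have h5 : a * Bl S u' u' = a * Q := by linarith
      have h6 : Bl S u' u' = Q := by
        have := mul_left_cancel₀ hwp.ne' h5
        exact this
      have h7 : Bl S d d = 0 := by
        rw [hQu'] at h6
        linarith
      have h8 : d = 0 := by
        by_contra hne
        exact (Bl_pos S hS hne).ne' h7
      have h9 : u' = us := by
        have := sub_eq_zero.mp (hd ▸ h8)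
        exact this
      have h10 : a = Q⁻¹ := log_aux_eq hwp hQ h4
      rw [hw'u, h9, h10, hws]
  -- the value at the maximizer
  have hgws : Real.log (ws i) - (ws ⬝ᵥ (S *ᵥ ws)) / (ws i) = -Real.log Q - 1 := by
    have h1 : ws ⬝ᵥ (S *ᵥ ws) = Q⁻¹ := by
      rw [hws, Matrix.mulVec_smul, dotProduct_smul, smul_dotProduct]
      show Q⁻¹ • (Q⁻¹ • Bl S us us) = Q⁻¹
      rw [← hQdef, smul_eq_mul, smul_eq_mul]
      field_simp
    rw [hwsi, h1, Real.log_inv]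
    rw [div_self (inv_ne_zero hQ.ne')]
  -- assembling
  refine ⟨Ts, ⟨hTsFeas, ?_⟩, ?_⟩
  · intro T' hF'
    have hF'' : Feas i Sig G T' := hF'
    have hPD' : T'.PosDef := hF''.1.1
    rw [decomp T' hF'', decomp Ts hTsFeas]
    apply add_le_add_right
    have hb := (gbound (wvec i T') (wvec_i_pos i hPD')
      (fun j hj hadj => feas_constraint i Sig G hF'' hSigz j hj hadj)).1
    rw [hTs_w, hgws]
    exact hb
  · intro T'' hT''
    obtain ⟨hF'', hmax''⟩ := hT''
    have hF2 : Feas i Sig G T'' := hF''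
    obtain ⟨⟨hPD'', hz''⟩, hoff''⟩ := hF2
    have hle1 := hmax'' Ts hTsFeas
    have hle2 : -Real.log T''.det - (T''⁻¹ * S).trace ≤
        -Real.log Ts.det - (Ts⁻¹ * S).trace := by
      rw [decomp T'' hF'', decomp Ts hTsFeas]
      apply add_le_add_right
      have hb := (gbound (wvec i T'') (wvec_i_pos i hPD'')
        (fun j hj hadj => feas_constraint i Sig G hF'' hSigz j hj hadj)).1
      rw [hTs_w, hgws]
      exact hb
    have heq : -Real.log T''.det - (T''⁻¹ * S).trace =
        -Real.log Ts.det - (Ts⁻¹ * S).trace := le_antisymm hle2 hle1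
    have hgeq : Real.log (wvec i T'' i)
        - (wvec i T'' ⬝ᵥ (S *ᵥ wvec i T'')) / (wvec i T'' i) = -Real.log Q - 1 := by
      have e1 := decomp T'' hF''
      have e2 := decomp Ts hTsFeas
      rw [e1, e2] at heq
      have := add_left_cancel heq
      rw [hTs_w, hgws] at this
      exact this
    have hww : wvec i T'' = ws := (gbound (wvec i T'') (wvec_i_pos i hPD'')
      (fun j hj hadj => feas_constraint i Sig G hF'' hSigz j hj hadj)).2 hgeq
    -- conclude equality of matrices
    apply eq_of_same_w i Sig (herm_symm hPD''.1) (herm_symm hTsPD.1) hoff''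
      (fun j k hj hk => Tcon_off i Sig ws hj hk)
      (by rw [← hww] at *; exact mulVec_wvec i hPD'')
      (Tcon_mulVec i Sig ws hwsipos.ne')
      hwsipos.ne'
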